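/- For a normalized nondegenerate C² speed f with c = f_x(0,1) > 0, the function w(r) = r - (c+ε)/r is a sub-solution of f(w'/(1+w²), w/r) = 1 for each ε > 0 and all sufficiently large r, i.e. f(w'/(1+w²), w/r) ≤ 1 for large r. -/

import Mathlib

open Filter

/-- w(r) = r - (c+ε)/r is a sub-solution of f(w'/(1+w²), w/r) = 1 for large r. -/
theorem stmt8 (f : ℝ × ℝ → ℝ)
    (hf : ContDiff ℝ 2 f)
    (hhom : ∀ c : ℝ, 0 < c → ∀ x y : ℝ, f (c * x, c * y) = c * f (x, y))
    (hfx : ∀ p : ℝ × ℝ, 0 < deriv (fun t => f (t, p.2)) p.1)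
    (hfy : ∀ p : ℝ × ℝ, 0 < deriv (fun t => f (p.1, t)) p.2)
    (hnorm : f (0, 1) = 1)
    (c : ℝ) (hc : c = deriv (fun t => f (t, 1)) 0) (hcpos : 0 < c) :
    ∀ ε : ℝ, 0 < ε → ∀ᶠ r in atTop,
      f ((1 + (c + ε) / r ^ 2) / (1 + (r - (c + ε) / r) ^ 2),
         (r - (c + ε) / r) / r) ≤ 1 := by
  intro ε hε
  set k := c + ε with hk
  have hkpos : 0 < k := by positivity
  set g : ℝ → ℝ := fun t => f (t, 1) with hg
  have hgd : DifferentiableAt ℝ g 0 := by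
    have h1 : DifferentiableAt ℝ f ((0:ℝ), (1:ℝ)) :=
      (hf.differentiable (by norm_num)).differentiableAt
    exact h1.comp 0 (differentiableAt_id.prodMk (differentiableAt_const 1))
  have hgc : HasDerivAt g c 0 := hc ▸ hgd.hasDerivAt
  have hslope : Tendsto (slope g 0) (nhdsWithin 0 {0}ᶜ) (nhds c) :=
    hasDerivAt_iff_tendsto_slope.1 hgc
  set A : ℝ → ℝ := fun r => (1 + k / r ^ 2) / (1 + (r - k / r) ^ 2) with hA
  set B : ℝ → ℝ := fun r => (r - k / r) / r with hB
  -- k / r² → 0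
  have hk0 : Tendsto (fun r : ℝ => k / r ^ 2) atTop (nhds 0) :=
    tendsto_const_nhds.div_atTop (tendsto_pow_atTop two_ne_zero)
  have hinv : Tendsto (fun r : ℝ => 1 / r ^ 2) atTop (nhds 0) :=
    tendsto_const_nhds.div_atTop (tendsto_pow_atTop two_ne_zero)
  -- B r = 1 - k/r² eventually
  have hBeq : ∀ᶠ r : ℝ in atTop, B r = 1 - k / r ^ 2 := by
    filter_upwards [eventually_gt_atTop (0:ℝ)] with r hr
    have : r ≠ 0 := ne_of_gt hr
    simp only [hB]
    field_simp
  have hBlim : Tendsto B atTop (nhds 1) := by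
    have : Tendsto (fun r : ℝ => 1 - k / r ^ 2) atTop (nhds (1 - 0)) :=
      tendsto_const_nhds.sub hk0
    simpa using this.congr' (hBeq.mono fun r h => h.symm)
  -- r² A r → 1
  have hAeq : ∀ᶠ r : ℝ in atTop, r ^ 2 * A r
      = (1 + k / r ^ 2) / (1 / r ^ 2 + (1 - k / r ^ 2) ^ 2) := by
    filter_upwards [eventually_gt_atTop (0:ℝ)] with r hr
    have hr0 : r ≠ 0 := ne_of_gt hr
    rw [hA]
    field_simp
  have hAlim : Tendsto (fun r => r ^ 2 * A r) atTop (nhds 1) := by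
    have hnum : Tendsto (fun r : ℝ => 1 + k / r ^ 2) atTop (nhds 1) := by
      simpa using tendsto_const_nhds.add hk0
    have hden : Tendsto (fun r : ℝ => 1 / r ^ 2 + (1 - k / r ^ 2) ^ 2) atTop (nhds 1) := by
      have h2 : Tendsto (fun r : ℝ => (1 - k / r ^ 2) ^ 2) atTop (nhds 1) := by
        have h3 : Tendsto (fun r : ℝ => 1 - k / r ^ 2) atTop (nhds (1 - 0)) :=
          tendsto_const_nhds.sub hk0
        simpa using h3.pow 2
      simpa using hinv.add h2
    have hd : Tendsto (fun r : ℝ => (1 + k / r ^ 2) / (1 / r ^ 2 + (1 - k / r ^ 2) ^ 2))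
        atTop (nhds 1) := by
      have := hnum.div hden one_ne_zero; rw [div_one] at this; exact this
    exact hd.congr' (hAeq.mono fun r h => h.symm)
  -- positivity eventually
  have hApos : ∀ᶠ r : ℝ in atTop, 0 < A r := by
    filter_upwards [eventually_gt_atTop (0:ℝ)] with r hr
    have : (0:ℝ) < 1 + k / r ^ 2 := by positivity
    have h2 : (0:ℝ) < 1 + (r - k / r) ^ 2 := by positivity
    exact div_pos this h2
  have hBpos : ∀ᶠ r : ℝ in atTop, 0 < B r :=
    hBlim.eventually_const_lt (by norm_num)
  set u : ℝ → ℝ := fun r => A r / B r with hu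
  have hupos : ∀ᶠ r : ℝ in atTop, 0 < u r := by
    filter_upwards [hApos, hBpos] with r h1 h2
    exact div_pos h1 h2
  -- r² u → 1
  have hr2u : Tendsto (fun r => r ^ 2 * u r) atTop (nhds 1) := by
    have : Tendsto (fun r => (r ^ 2 * A r) / B r) atTop (nhds 1) := by
      have := hAlim.div hBlim one_ne_zero; rw [div_one] at this; exact this
    refine this.congr (fun r => ?_)
    rw [hu]; ring
  -- u → 0 within {0}ᶜ
  have hu0 : Tendsto u atTop (nhds 0) := by
    have : Tendsto (fun r => (r ^ 2 * u r) * (1 / r ^ 2)) atTop (nhds 0) := by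
      simpa using hr2u.mul hinv
    refine (this.congr' ?_)
    filter_upwards [eventually_gt_atTop (0:ℝ)] with r hr
    have hr0 : (r:ℝ) ≠ 0 := ne_of_gt hr
    field_simp
  have hu0' : Tendsto u atTop (nhdsWithin 0 {0}ᶜ) := by
    rw [tendsto_nhdsWithin_iff]
    refine ⟨hu0, ?_⟩
    filter_upwards [hupos] with r hr
    exact ne_of_gt hr
  have hslopeu : Tendsto (fun r => slope g 0 (u r)) atTop (nhds c) :=
    hslope.comp hu0'
  -- E
  set E : ℝ → ℝ := fun r => -k + B r * (r ^ 2 * u r) * slope g 0 (u r) with hE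
  have hElim : Tendsto E atTop (nhds (-ε)) := by
    have : Tendsto E atTop (nhds (-k + 1 * 1 * c)) :=
      tendsto_const_nhds.add ((hBlim.mul hr2u).mul hslopeu)
    convert this using 2
    rw [hk]; ring
  have hEneg : ∀ᶠ r : ℝ in atTop, E r < 0 :=
    hElim.eventually_lt_const (by linarith)
  -- key identity eventually
  have hg0 : g 0 = 1 := hnorm
  filter_upwards [hApos, hBpos, hBeq, hEneg, eventually_gt_atTop (0:ℝ)]
    with r hA1 hB1 hB2 hE1 hr
  have hr0 : r ≠ 0 := ne_of_gt hr
  have hB0 : B r ≠ 0 := ne_of_gt hB1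
  have hu1 : u r ≠ 0 := ne_of_gt (div_pos hA1 hB1)
  have hfid : f (A r, B r) = B r * g (u r) := by
    have := hhom (B r) hB1 (u r) 1
    rw [mul_one] at this
    rw [show B r * u r = A r by rw [hu]; field_simp] at this
    exact this
  have hslope_eq : slope g 0 (u r) = (g (u r) - 1) / u r := by
    rw [slope_def_field, hg0, sub_zero]
  show f (A r, B r) ≤ 1
  have hkey : f (A r, B r) - 1 = E r / r ^ 2 := by
    rw [hfid]
    simp only [hE]
    rw [hslope_eq, hB2]
    field_simp
    ring
  have : E r / r ^ 2 < 0 := div_neg_of_neg_of_pos hE1 (by positivity)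
  linarith
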